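/- Let R be a unital ring, n ≥ 2, M a 2-torsion free unital Mₙ(R)-bimodule, and Δ : Mₙ(R) → M an additive map satisfying: AB = BA = 0 implies Δ(A)B + AΔ(B) + Δ(B)A + BΔ(A) = 0. Set E = E₁₁ and F = 1 - E₁₁, and suppose EΔ(E)F = FΔ(E)E = 0. Then for every A ∈ Mₙ(R), Δ(EAE) = EΔ(EAE)E and Δ(FAF) = FΔ(FAF)F. -/

import Mathlib

/-- A (not necessarily unital) bimodule structure of a ring `A` on an
additive group `M`, given by a left action `l` and a right action `r`. -/
structure RingBimod (A M : Type*) [Ring A] [AddCommGroup M] where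
  l : A → M → M
  r : M → A → M
  l_add : ∀ a m₁ m₂, l a (m₁ + m₂) = l a m₁ + l a m₂
  add_l : ∀ a₁ a₂ m, l (a₁ + a₂) m = l a₁ m + l a₂ m
  r_add : ∀ m₁ m₂ a, r (m₁ + m₂) a = r m₁ a + r m₂ a
  add_r : ∀ m a₁ a₂, r m (a₁ + a₂) = r m a₁ + r m a₂
  mul_l : ∀ a₁ a₂ m, l (a₁ * a₂) m = l a₁ (l a₂ m)
  r_mul : ∀ m a₁ a₂, r m (a₁ * a₂) = r (r m a₁) a₂
  l_r : ∀ a₁ m a₂, l a₁ (r m a₂) = r (l a₁ m) a₂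

namespace RingBimod

variable {A M : Type*} [Ring A] [AddCommGroup M] (bm : RingBimod A M)

lemma l_zero (a : A) : bm.l a 0 = 0 := by
  have h := bm.l_add a 0 0
  rw [add_zero] at h
  exact (left_eq_add.mp h)

lemma zero_l (m : M) : bm.l 0 m = 0 := by
  have h := bm.add_l 0 0 m
  rw [add_zero] at h
  exact (left_eq_add.mp h)

lemma r_zero (m : M) : bm.r m 0 = 0 := by
  have h := bm.add_r m 0 0
  rw [add_zero] at h
  exact (left_eq_add.mp h)

lemma zero_r (a : A) : bm.r 0 a = 0 := by
  have h := bm.r_add 0 0 a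
  rw [add_zero] at h
  exact (left_eq_add.mp h)

end RingBimod

theorem aux {A M : Type*} [Ring A] [AddCommGroup M] (bm : RingBimod A M)
    (hunit : ∀ m : M, bm.l 1 m = m ∧ bm.r m 1 = m)
    (htf : ∀ m : M, m + m = 0 → m = 0)
    (Δ : A → M)
    (hΔ : ∀ X Y, X * Y = 0 → Y * X = 0 →
      bm.r (Δ X) Y + bm.l X (Δ Y) + bm.r (Δ Y) X + bm.l Y (Δ X) = 0)
    (e f : A) (hef : e * f = 0) (hfe : f * e = 0) (hee : e * e = e)
    (hsum : e + f = 1)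
    (h1 : bm.l e (bm.r (Δ f) f) = 0) (h2 : bm.l f (bm.r (Δ f) e) = 0)
    (X : A) (hXf : X * f = 0) (hfX : f * X = 0) :
    Δ X = bm.l e (bm.r (Δ X) e) := by
  have hff : f * f = f := by
    have h := congrArg (fun a => f * a) hsum
    simp only [mul_add, mul_one, hfe, zero_add] at h
    exact h
  have hXe : X * e = X := by
    have h := congrArg (fun a => X * a) hsum
    simp only [mul_add, mul_one, hXf, add_zero] at h
    exact h
  have heX : e * X = X := by
    have h := congrArg (fun a => a * X) hsum
    simp only [add_mul, one_mul, hfX, add_zero] at h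
    exact h
  set D := Δ X with hD
  set G := Δ f with hG
  have hS : bm.r D f + bm.l X G + bm.r G X + bm.l f D = 0 := hΔ X f hXf hfX
  -- corner e _ f
  have t1 : bm.l e (bm.r (bm.r D f) f) = bm.l e (bm.r D f) := by
    rw [bm.l_r, bm.l_r, ← bm.r_mul, hff, ← bm.l_r]
  have t2 : bm.l e (bm.r (bm.l X G) f) = 0 := by
    rw [← bm.l_r, ← bm.mul_l, heX, ← hXe, bm.mul_l, h1, bm.l_zero]
  have t3 : bm.l e (bm.r (bm.r G X) f) = 0 := by
    rw [bm.l_r, bm.l_r, ← bm.r_mul, hXf, bm.r_zero]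
  have t4 : bm.l e (bm.r (bm.l f D) f) = 0 := by
    rw [← bm.l_r, ← bm.mul_l, hef, bm.zero_l]
  have heDf : bm.l e (bm.r D f) = 0 := by
    have h0 : bm.l e (bm.r (bm.r D f + bm.l X G + bm.r G X + bm.l f D) f) = 0 := by
      rw [hS, bm.zero_r, bm.l_zero]
    rw [bm.r_add, bm.r_add, bm.r_add, bm.l_add, bm.l_add, bm.l_add,
      t1, t2, t3, t4] at h0
    simpa using h0
  -- corner f _ e
  have s1 : bm.l f (bm.r (bm.r D f) e) = 0 := by
    rw [bm.l_r, bm.l_r, ← bm.r_mul, hfe, bm.r_zero]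
  have s2 : bm.l f (bm.r (bm.l X G) e) = 0 := by
    rw [← bm.l_r, ← bm.mul_l, hfX, bm.zero_l]
  have s3 : bm.l f (bm.r (bm.r G X) e) = 0 := by
    rw [bm.l_r, bm.l_r]
    conv_lhs => rw [← heX]
    rw [bm.r_mul, ← bm.l_r, h2, bm.zero_r, bm.zero_r]
  have s4 : bm.l f (bm.r (bm.l f D) e) = bm.l f (bm.r D e) := by
    rw [← bm.l_r, ← bm.mul_l, hff, bm.l_r]
  have hfDe : bm.l f (bm.r D e) = 0 := by
    have h0 : bm.l f (bm.r (bm.r D f + bm.l X G + bm.r G X + bm.l f D) e) = 0 := by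
      rw [hS, bm.zero_r, bm.l_zero]
    rw [bm.r_add, bm.r_add, bm.r_add, bm.l_add, bm.l_add, bm.l_add,
      s1, s2, s3, s4] at h0
    simpa using h0
  -- corner f _ f
  have w1 : bm.l f (bm.r (bm.r D f) f) = bm.l f (bm.r D f) := by
    rw [bm.l_r, bm.l_r, ← bm.r_mul, hff, ← bm.l_r]
  have w2 : bm.l f (bm.r (bm.l X G) f) = 0 := by
    rw [← bm.l_r, ← bm.mul_l, hfX, bm.zero_l]
  have w3 : bm.l f (bm.r (bm.r G X) f) = 0 := by
    rw [bm.l_r, bm.l_r]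
    conv_lhs => rw [← heX]
    rw [bm.r_mul, ← bm.l_r, h2, bm.zero_r, bm.zero_r]
  have w4 : bm.l f (bm.r (bm.l f D) f) = bm.l f (bm.r D f) := by
    rw [← bm.l_r, ← bm.mul_l, hff, bm.l_r, ← bm.l_r]
  have hfDf : bm.l f (bm.r D f) = 0 := by
    apply htf
    have h0 : bm.l f (bm.r (bm.r D f + bm.l X G + bm.r G X + bm.l f D) f) = 0 := by
      rw [hS, bm.zero_r, bm.l_zero]
    rw [bm.r_add, bm.r_add, bm.r_add, bm.l_add, bm.l_add, bm.l_add,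
      w1, w2, w3, w4] at h0
    calc bm.l f (bm.r D f) + bm.l f (bm.r D f)
        = bm.l f (bm.r D f) + 0 + 0 + bm.l f (bm.r D f) := by abel
      _ = 0 := h0
  -- conclude
  have : D = bm.l (e + f) (bm.r D (e + f)) := by
    rw [hsum, (hunit (bm.r D 1)).1, (hunit D).2]
  conv_lhs => rw [this]
  rw [bm.add_r, bm.l_add, bm.add_l, bm.add_l, heDf, hfDe, hfDf]
  abel

theorem stmt4 (R : Type*) [Ring R] (n : ℕ) (hn : 2 ≤ n)
    (M : Type*) [AddCommGroup M] (bm : RingBimod (Matrix (Fin n) (Fin n) R) M)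
    (hunit : ∀ m : M, bm.l 1 m = m ∧ bm.r m 1 = m)
    (htf : ∀ m : M, m + m = 0 → m = 0)
    (Δ : Matrix (Fin n) (Fin n) R → M)
    (hadd : ∀ A B, Δ (A + B) = Δ A + Δ B)
    (hΔ : ∀ A B, A * B = 0 → B * A = 0 →
      bm.r (Δ A) B + bm.l A (Δ B) + bm.r (Δ B) A + bm.l B (Δ A) = 0)
    (E F : Matrix (Fin n) (Fin n) R)
    (hE : E = Matrix.single ⟨0, by omega⟩ ⟨0, by omega⟩ (1 : R))
    (hF : F = 1 - E)
    (hEF1 : bm.l E (bm.r (Δ E) F) = 0) (hEF2 : bm.l F (bm.r (Δ E) E) = 0) :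
    ∀ A : Matrix (Fin n) (Fin n) R,
      Δ (E * A * E) = bm.l E (bm.r (Δ (E * A * E)) E) ∧
      Δ (F * A * F) = bm.l F (bm.r (Δ (F * A * F)) F) := by
  have hEE : E * E = E := by
    rw [hE, Matrix.single_mul_single_same, one_mul]
  have hEF : E * F = 0 := by rw [hF, mul_sub, mul_one, hEE, sub_self]
  have hFE : F * E = 0 := by rw [hF, sub_mul, one_mul, hEE, sub_self]
  have hFF : F * F = F := by rw [hF, sub_mul, one_mul, mul_sub, mul_one, hEE]; abel
  have hsum : E + F = 1 := by rw [hF]; abel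
  have hsum' : F + E = 1 := by rw [hF]; abel
  -- corner facts about Δ F from the pair (E, F)
  have hS : bm.r (Δ E) F + bm.l E (Δ F) + bm.r (Δ F) E + bm.l F (Δ E) = 0 :=
    hΔ E F hEF hFE
  have u1 : bm.l E (bm.r (bm.r (Δ E) F) F) = 0 := by
    rw [bm.l_r, hEF1, bm.zero_r]
  have u2 : bm.l E (bm.r (bm.l E (Δ F)) F) = bm.l E (bm.r (Δ F) F) := by
    rw [← bm.l_r, ← bm.mul_l, hEE]
  have u3 : bm.l E (bm.r (bm.r (Δ F) E) F) = 0 := by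
    rw [bm.l_r, bm.l_r, ← bm.r_mul, hEF, bm.r_zero]
  have u4 : bm.l E (bm.r (bm.l F (Δ E)) F) = 0 := by
    rw [← bm.l_r, ← bm.mul_l, hEF, bm.zero_l]
  have h1' : bm.l E (bm.r (Δ F) F) = 0 := by
    have h0 : bm.l E (bm.r (bm.r (Δ E) F + bm.l E (Δ F) + bm.r (Δ F) E + bm.l F (Δ E)) F) = 0 := by
      rw [hS, bm.zero_r, bm.l_zero]
    rw [bm.r_add, bm.r_add, bm.r_add, bm.l_add, bm.l_add, bm.l_add,
      u1, u2, u3, u4] at h0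
    simpa using h0
  have v1 : bm.l F (bm.r (bm.r (Δ E) F) E) = 0 := by
    rw [bm.l_r, bm.l_r, ← bm.r_mul, hFE, bm.r_zero]
  have v2 : bm.l F (bm.r (bm.l E (Δ F)) E) = 0 := by
    rw [← bm.l_r, ← bm.mul_l, hFE, bm.zero_l]
  have v3 : bm.l F (bm.r (bm.r (Δ F) E) E) = bm.l F (bm.r (Δ F) E) := by
    rw [bm.l_r, bm.l_r, ← bm.r_mul, hEE, ← bm.l_r]
  have v4 : bm.l F (bm.r (bm.l F (Δ E)) E) = 0 := by
    rw [← bm.l_r, ← bm.mul_l, hFF]; exact hEF2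
  have h2' : bm.l F (bm.r (Δ F) E) = 0 := by
    have h0 : bm.l F (bm.r (bm.r (Δ E) F + bm.l E (Δ F) + bm.r (Δ F) E + bm.l F (Δ E)) E) = 0 := by
      rw [hS, bm.zero_r, bm.l_zero]
    rw [bm.r_add, bm.r_add, bm.r_add, bm.l_add, bm.l_add, bm.l_add,
      v1, v2, v3, v4] at h0
    simpa using h0
  intro A
  constructor
  · exact aux bm hunit htf Δ hΔ E F hEF hFE hEE hsum h1' h2' (E * A * E)
      (by rw [mul_assoc, hEF, mul_zero])
      (by rw [← mul_assoc, ← mul_assoc, hFE, zero_mul, zero_mul])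
  · exact aux bm hunit htf Δ hΔ F E hFE hEF hFF hsum' hEF2 hEF1 (F * A * F)
      (by rw [mul_assoc, hFE, mul_zero])
      (by rw [← mul_assoc, ← mul_assoc, hEF, zero_mul, zero_mul])
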